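/- For the logistic loss ℓ(z) = ln(1+e^z), the ratio z ↦ ℓ'(z)²/(ℓ(z)ℓ''(z)) = e^z/ln(1+e^z) is increasing on ℝ. -/

import Mathlib

open Real

lemma log_pos_aux (z : ℝ) : 0 < Real.log (1 + Real.exp z) :=
  Real.log_pos (by linarith [Real.exp_pos z])

lemma key_ineq (z : ℝ) : Real.exp z / (1 + Real.exp z) < Real.log (1 + Real.exp z) := by
  have hx : (0:ℝ) < 1 + Real.exp z := by positivity
  have h1 : Real.log ((1 + Real.exp z)⁻¹) < (1 + Real.exp z)⁻¹ - 1 := by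
    apply Real.log_lt_sub_one_of_pos (by positivity)
    have : (1:ℝ) < 1 + Real.exp z := by linarith [Real.exp_pos z]
    rw [ne_eq, inv_eq_one]
    linarith
  rw [Real.log_inv] at h1
  have h2 : 1 - (1 + Real.exp z)⁻¹ < Real.log (1 + Real.exp z) := by linarith
  have h3 : Real.exp z / (1 + Real.exp z) = 1 - (1 + Real.exp z)⁻¹ := by
    field_simp
    ring
  linarith

/-- For the logistic loss, the ratio `ℓ'²/(ℓℓ'') = e^z / ln(1+e^z)` is increasing on ℝ. -/
theorem stmt_6 :
    StrictMono (fun z : ℝ => Real.exp z / Real.log (1 + Real.exp z)) := by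
  have hd : ∀ z : ℝ, HasDerivAt (fun z : ℝ => Real.exp z / Real.log (1 + Real.exp z))
      ((Real.exp z * Real.log (1 + Real.exp z) -
        Real.exp z * (Real.exp z / (1 + Real.exp z))) / (Real.log (1 + Real.exp z))^2) z := by
    intro z
    have h1 : HasDerivAt (fun z : ℝ => 1 + Real.exp z) (Real.exp z) z := by
      exact ((hasDerivAt_const z (1:ℝ)).add (Real.hasDerivAt_exp z)).congr_deriv (zero_add _)
    have h2 : HasDerivAt (fun z : ℝ => Real.log (1 + Real.exp z))
        (Real.exp z / (1 + Real.exp z)) z := by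
      have := h1.log (by positivity)
      simpa using this
    exact (Real.hasDerivAt_exp z).div h2 (ne_of_gt (log_pos_aux z))
  apply strictMono_of_deriv_pos
  intro z
  rw [(hd z).deriv]
  have hL := log_pos_aux z
  have hk := key_ineq z
  have he := Real.exp_pos z
  have : Real.exp z * (Real.exp z / (1 + Real.exp z)) < Real.exp z * Real.log (1 + Real.exp z) := by
    exact mul_lt_mul_of_pos_left hk he
  apply div_pos (by linarith) (by positivity)
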